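/- Let V : ℝ → ℝ, λ ∈ ℝ, and let B(x,λ) be as in the context. Let E denote the 4×4 real matrix whose only nonzero entry is −1 in position (3,1) (so E is the entrywise derivative of B(x,λ) with respect to λ). Suppose z, w : ℝ → ℝ⁴ are differentiable and satisfy z'(x) = B(x,λ) z(x) and w'(x) = B(x,λ) w(x) + E z(x) for all x ∈ ℝ. Then for every x ∈ ℝ, the derivative of x ↦ ⟨z(x), J w(x)⟩ equals −z₁(x)², where z₁ denotes the first component of z. -/

import Mathlib

open Matrix

/-- The 4×4 standard symplectic matrix `J = [[0, I₂], [-I₂, 0]]`. -/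
def J4 : Matrix (Fin 4) (Fin 4) ℝ :=
  !![0, 0, 1, 0;
     0, 0, 0, 1;
     -1, 0, 0, 0;
     0, -1, 0, 0]

/-- The coefficient matrix `B(x, λ)` of the first-order system associated with the linearized
Swift–Hohenberg eigenvalue problem, with potential `V`. -/
def Bmat (V : ℝ → ℝ) (lam x : ℝ) : Matrix (Fin 4) (Fin 4) ℝ :=
  !![0, 0, 0, 1;
     0, 0, 1, -2;
     -lam - 1 + V x, 0, 0, 0;
     0, 1, 0, 0]

/-- The entrywise `λ`-derivative of `B(x, λ)`: the matrix whose only nonzero entry is `-1` in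
position `(3,1)`. -/
def Emat : Matrix (Fin 4) (Fin 4) ℝ :=
  !![0, 0, 0, 0;
     0, 0, 0, 0;
     -1, 0, 0, 0;
     0, 0, 0, 0]

/-- If `z' = B z` and `w' = B w + E z`, then `d/dx ⟨z, J w⟩ = -z₁²`. -/
theorem stmt_11 (V : ℝ → ℝ) (lam : ℝ)
    (z w : ℝ → Fin 4 → ℝ)
    (hz : ∀ x, HasDerivAt z ((Bmat V lam x) *ᵥ z x) x)
    (hw : ∀ x, HasDerivAt w ((Bmat V lam x) *ᵥ w x + Emat *ᵥ z x) x) :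
    ∀ x : ℝ, HasDerivAt (fun y => z y ⬝ᵥ (J4 *ᵥ w y)) (-(z x 0) ^ 2) x := by
  intro x
  have hzc := hasDerivAt_pi.1 (hz x)
  have hwc := hasDerivAt_pi.1 (hw x)
  have heq : (fun y => z y ⬝ᵥ (J4 *ᵥ w y))
      = fun y => z y 0 * w y 2 + z y 1 * w y 3 - z y 2 * w y 0 - z y 3 * w y 1 := by
    funext y
    simp [J4, dotProduct, mulVec, Fin.sum_univ_four, Matrix.vecHead, Matrix.vecTail]
    ring
  rw [heq]
  have hd := ((((hzc 0).mul (hwc 2)).add ((hzc 1).mul (hwc 3))).sub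
      ((hzc 2).mul (hwc 0))).sub ((hzc 3).mul (hwc 1))
  refine hd.congr_deriv ?_
  simp [Bmat, Emat, mulVec, dotProduct, Fin.sum_univ_four]
  ring
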